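/- arXiv:0904.3411 — 2 statements merged into one kernel-verified Lean document; each statement's English description precedes it below -/
import Mathlib

section
/- Let G be a finite group with a symmetric generating set S, and let (V, ρ) be a finite-dimensional unitary representation of G with no nonzero G-invariant vector. If for some α > 0 the property I(α, G, S) holds (every S-almost-invariant vector is G-almost-invariant with constant α), then for every unit vector v in V there exists s ∈ S with ‖ρ(s)v − v‖ ≥ 1/(2α). -/
/-- If a finite group `G` with symmetric generating set `S` satisfies
property `I(α, G, S)` for a finite-dimensional unitary representation `(V, ρ)` with
no nonzero invariant vector, then every unit vector moves by at least `1/(2α)`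
under some `s ∈ S`. -/
theorem stmt0 {G : Type*} [Group G] [Fintype G]
    {V : Type*} [NormedAddCommGroup V] [InnerProductSpace ℂ V] [FiniteDimensional ℂ V]
    (ρ : G →* (V ≃ₗᵢ[ℂ] V)) (S : Set G)
    (hsymm : ∀ s ∈ S, s⁻¹ ∈ S) (hgen : Subgroup.closure S = ⊤)
    (α : ℝ) (hα : 0 < α)
    (hI : ∀ (v : V) (δ : ℝ), 0 < δ → (∀ s ∈ S, ‖ρ s v - v‖ < δ) →
      ∀ g : G, ‖ρ g v - v‖ < α * δ)
    (hnoinv : ∀ v : V, (∀ g : G, ρ g v = v) → v = 0) :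
    ∀ v : V, ‖v‖ = 1 → ∃ s ∈ S, 1 / (2 * α) ≤ ‖ρ s v - v‖ := by
  intro v hv
  by_contra h
  push_neg at h
  have hδ : (0:ℝ) < 1 / (2 * α) := by positivity
  have hall : ∀ g : G, ‖ρ g v - v‖ < 1 / 2 := by
    intro g
    have := hI v (1 / (2 * α)) hδ (fun s hs => h s hs) g
    calc ‖ρ g v - v‖ < α * (1 / (2 * α)) := this
      _ = 1 / 2 := by field_simp
  set n : ℕ := Fintype.card G with hn
  have hnpos : (0:ℕ) < n := Fintype.card_pos
  set w : V := (n : ℂ)⁻¹ • ∑ g : G, ρ g v with hw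
  have hinv : ∀ h : G, ρ h w = w := by
    intro h
    have : ρ h (∑ g : G, ρ g v) = ∑ g : G, ρ g v := by
      rw [map_sum]
      rw [← Equiv.sum_comp (Equiv.mulLeft h) (fun g => ρ g v)]
      refine Finset.sum_congr rfl fun x _ => ?_
      simp [map_mul]
    simp [hw, map_smul, this]
  have hw0 : w = 0 := hnoinv w hinv
  have hdist : ‖w - v‖ < 1 / 2 := by
    have hv' : v = (n : ℂ)⁻¹ • ∑ _g : G, v := by
      rw [Finset.sum_const, Finset.card_univ, ← hn, ← Nat.cast_smul_eq_nsmul ℂ, smul_smul,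
        inv_mul_cancel₀ (by exact_mod_cast hnpos.ne'), one_smul]
    have : w - v = (n : ℂ)⁻¹ • ∑ g : G, (ρ g v - v) := by
      rw [Finset.sum_sub_distrib, smul_sub, ← hw, ← hv']
    rw [this]
    calc ‖(n : ℂ)⁻¹ • ∑ g : G, (ρ g v - v)‖
        = (n:ℝ)⁻¹ * ‖∑ g : G, (ρ g v - v)‖ := by
          rw [norm_smul]; simp
      _ ≤ (n:ℝ)⁻¹ * ∑ g : G, ‖ρ g v - v‖ := by
          gcongr
          exact norm_sum_le _ _
      _ < (n:ℝ)⁻¹ * ∑ _g : G, (1/2 : ℝ) := by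
          gcongr
          · simpa using hnpos
          · exact hall _
      _ = 1 / 2 := by
          rw [Finset.sum_const, Finset.card_univ, ← hn, nsmul_eq_mul, ← mul_assoc,
            inv_mul_cancel₀ (by exact_mod_cast hnpos.ne'), one_mul]
  rw [hw0] at hdist
  simp only [zero_sub, norm_neg] at hdist
  rw [hv] at hdist
  norm_num at hdist
end

section
/- Let X be a connected k-regular finite graph, Δ = (1/k)A its normalized adjacency operator. If every eigenvalue λ of Δ other than 1 satisfies |λ| ≤ 1 − η for some η > 0, then for every subset A of vertices with |A| ≤ |X|/2, the vertex boundary satisfies |∂A| ≥ ε|A| for some ε > 0 depending only on η. -/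
open Finset Matrix

lemma eig_one_const {V : Type} [Fintype V] (G : SimpleGraph V) [DecidableRel G.Adj]
    {k : ℕ} (hconn : G.Connected) (hreg : G.IsRegularOfDegree k)
    (v : V → ℝ) (hv : (G.adjMatrix ℝ) *ᵥ v = (k : ℝ) • v) (x y : V) : v x = v y := by
  have hne : Nonempty V := hconn.nonempty
  obtain ⟨x0, -, hx0⟩ := Finset.exists_max_image Finset.univ v ⟨Classical.arbitrary V, mem_univ _⟩
  have hx0' : ∀ a, v a ≤ v x0 := fun a => hx0 a (mem_univ a)
  have step : ∀ a b : V, v a = v x0 → G.Adj a b → v b = v x0 := by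
    intro a b ha hab
    by_contra hb
    have hblt : v b < v x0 := lt_of_le_of_ne (hx0' b) hb
    have hsum : ∑ y ∈ G.neighborFinset a, v y = (k : ℝ) * v x0 := by
      have := congrFun hv a
      rw [SimpleGraph.adjMatrix_mulVec_apply] at this
      simpa [ha] using this
    have hlt : ∑ y ∈ G.neighborFinset a, v y < ∑ _y ∈ G.neighborFinset a, v x0 :=
      Finset.sum_lt_sum (fun i _ => hx0' i) ⟨b, (G.mem_neighborFinset a b).2 hab, hblt⟩
    rw [Finset.sum_const, G.card_neighborFinset_eq_degree, hreg a, nsmul_eq_mul, hsum] at hlt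
    exact lt_irrefl _ hlt
  have aux : ∀ (a b : V) (w : G.Walk a b), v a = v x0 → v b = v x0 := by
    intro a b w
    induction w with
    | nil => exact id
    | cons h p ih => intro ha; exact ih (step _ _ ha h)
  have all : ∀ b : V, v b = v x0 := fun b => aux x0 b (hconn x0 b).some rfl
  rw [all x, all y]

lemma spectral_bound {V : Type} [Fintype V] [DecidableEq V] (G : SimpleGraph V)
    [DecidableRel G.Adj] {k : ℕ} (hk : 0 < k) (hconn : G.Connected)
    (hreg : G.IsRegularOfDegree k) {η : ℝ}
    (hspec : ∀ (lam : ℝ) (f : V → ℝ), f ≠ 0 →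
      ((k : ℝ)⁻¹ • G.adjMatrix ℝ) *ᵥ f = lam • f → lam = 1 ∨ |lam| ≤ 1 - η)
    (f : V → ℝ) (hf : ∑ x, f x = 0) :
    η * ∑ x, f x ^ 2 ≤ ∑ x, f x * (f x - (((k : ℝ)⁻¹ • G.adjMatrix ℝ) *ᵥ f) x) := by
  set M : Matrix V V ℝ := (k : ℝ)⁻¹ • G.adjMatrix ℝ with hMdef
  have hk0 : (k : ℝ) ≠ 0 := Nat.cast_ne_zero.2 hk.ne'
  have hM : M.IsHermitian := by
    ext i j
    simp [hMdef, Matrix.conjTranspose_apply, G.adj_comm]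
  set b := hM.eigenvectorBasis with hb
  set μ := hM.eigenvalues with hmu
  have hsymm : ∀ a c : V, M a c = M c a := by
    intro a c
    conv_lhs => rw [← hM]
    simp [Matrix.conjTranspose_apply]
  set F : EuclideanSpace ℝ V := (WithLp.equiv 2 (V → ℝ)).symm f with hF
  set g : V → ℝ := fun x => f x - (M *ᵥ f) x with hg
  set Gv : EuclideanSpace ℝ V := (WithLp.equiv 2 (V → ℝ)).symm g with hGv
  set c : V → ℝ := fun i => ∑ x, b i x * f x with hc
  -- inner products as sums
  have hinnF : ∀ i, (inner ℝ (b i) F : ℝ) = c i := by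
    intro i
    simp [hF, hc, PiLp.inner_apply, RCLike.inner_apply]
    exact Finset.sum_congr rfl fun x _ => mul_comm _ _
  have key : ∀ i, ∑ x, b i x * (M *ᵥ f) x = μ i * c i := by
    intro i
    have hme : M *ᵥ ⇑(b i) = μ i • ⇑(b i) := hM.mulVec_eigenvectorBasis i
    calc ∑ x, b i x * (M *ᵥ f) x = ∑ x, ∑ y, b i x * (M x y * f y) := by
          simp [Matrix.mulVec, dotProduct, Finset.mul_sum]
      _ = ∑ y, ∑ x, M y x * b i x * f y := by
          rw [Finset.sum_comm]
          exact Finset.sum_congr rfl fun y _ => Finset.sum_congr rfl fun x _ => by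
            rw [hsymm y x]; ring
      _ = ∑ y, (M *ᵥ ⇑(b i)) y * f y := by
          simp [Matrix.mulVec, dotProduct, Finset.sum_mul]
      _ = ∑ y, (μ i * b i y) * f y := by rw [hme]; simp [Pi.smul_apply, smul_eq_mul]
      _ = μ i * c i := by rw [hc, Finset.mul_sum]; exact Finset.sum_congr rfl fun y _ => by ring
  have hinnG : ∀ i, (inner ℝ (b i) Gv : ℝ) = (1 - μ i) * c i := by
    intro i
    have : (inner ℝ (b i) Gv : ℝ) = ∑ x, b i x * g x := by
      simp [hGv, PiLp.inner_apply, RCLike.inner_apply]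
      exact Finset.sum_congr rfl fun x _ => mul_comm _ _
    rw [this]
    simp only [hg, mul_sub]
    rw [Finset.sum_sub_distrib, key i]
    rw [show (∑ x, b i x * f x) = c i from rfl]
    ring
  -- per index bound
  have hterm : ∀ i, η * c i ^ 2 ≤ (1 - μ i) * c i ^ 2 := by
    intro i
    have hbne : (⇑(b i) : V → ℝ) ≠ 0 := by
      intro h
      exact b.orthonormal.ne_zero i (by ext x; exact congrFun h x)
    rcases hspec (μ i) (b i) hbne (hM.mulVec_eigenvectorBasis i) with h1 | h2
    · -- eigenvalue 1 : eigenvector constant, so c i = 0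
      have hme : M *ᵥ ⇑(b i) = μ i • ⇑(b i) := hM.mulVec_eigenvectorBasis i
      rw [h1, one_smul] at hme
      have hadj : (G.adjMatrix ℝ) *ᵥ ⇑(b i) = (k : ℝ) • ⇑(b i) := by
        rw [hMdef, Matrix.smul_mulVec] at hme
        have := congrArg (fun w => (k : ℝ) • w) hme
        simpa [smul_smul, mul_inv_cancel₀ hk0] using this
      have hconst := eig_one_const G hconn hreg (⇑(b i)) hadj
      have hne : Nonempty V := hconn.nonempty
      have hci : c i = 0 := by
        rw [hc]
        calc ∑ x, b i x * f x = ∑ x, b i (Classical.arbitrary V) * f x :=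
              Finset.sum_congr rfl fun x _ =>
                congrArg (fun t => t * f x) (hconst x (Classical.arbitrary V))
          _ = b i (Classical.arbitrary V) * ∑ x, f x := by rw [Finset.mul_sum]
          _ = 0 := by rw [hf, mul_zero]
      simp [hci]
    · have : η ≤ 1 - μ i := by
        have := abs_le.1 h2
        linarith [this.2]
      exact mul_le_mul_of_nonneg_right this (sq_nonneg _)
  -- expansions
  have hexp : ∀ w : EuclideanSpace ℝ V, (inner ℝ F w : ℝ) = ∑ i, c i * (inner ℝ (b i) w : ℝ) := by
    intro w
    conv_lhs => rw [← b.sum_repr' F]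
    rw [sum_inner]
    exact Finset.sum_congr rfl fun i _ => by rw [real_inner_smul_left, hinnF i]
  have hFG : (inner ℝ F Gv : ℝ) = ∑ i, c i * ((1 - μ i) * c i) := by
    rw [hexp Gv]
    exact Finset.sum_congr rfl fun i _ => by rw [hinnG i]
  have hFF : (inner ℝ F F : ℝ) = ∑ i, c i * c i := by
    rw [hexp F]
    exact Finset.sum_congr rfl fun i _ => by rw [hinnF i]
  have hFGsum : (inner ℝ F Gv : ℝ) = ∑ x, f x * (f x - (M *ᵥ f) x) := by
    simp [hF, hGv, hg, PiLp.inner_apply, RCLike.inner_apply]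
    exact Finset.sum_congr rfl fun x _ => mul_comm _ _
  have hFFsum : (inner ℝ F F : ℝ) = ∑ x, f x ^ 2 := by
    rw [hF, PiLp.inner_apply]
    simp [RCLike.inner_apply, sq]
  rw [← hFGsum, ← hFFsum, hFG, hFF, Finset.mul_sum]
  apply Finset.sum_le_sum
  intro i _
  have := hterm i
  nlinarith [sq_nonneg (c i)]
/-- A spectral gap for the normalized adjacency operator of a connected
`k`-regular graph implies vertex expansion: for every `η > 0` there is `ε > 0`
(depending only on `η`) such that any set of at most half the vertices has vertex
boundary of size at least `ε` times its size. -/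
theorem stmt8 (η : ℝ) (hη : 0 < η) :
    ∃ ε : ℝ, 0 < ε ∧
      ∀ (V : Type) [Fintype V] (G : SimpleGraph V) [DecidableRel G.Adj] (k : ℕ),
        0 < k → G.Connected → G.IsRegularOfDegree k →
        (∀ (lam : ℝ) (f : V → ℝ), f ≠ 0 →
            Matrix.mulVec ((k : ℝ)⁻¹ • G.adjMatrix ℝ) f = lam • f → lam = 1 ∨ |lam| ≤ 1 - η) →
        ∀ A : Set V, 2 * A.ncard ≤ Fintype.card V →
          ε * A.ncard ≤ ({y : V | y ∉ A ∧ ∃ x ∈ A, G.Adj x y}.ncard : ℝ) := by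
  refine ⟨η / 2, by positivity, ?_⟩
  intro V _ G _ k hk hconn hreg hspec A hAhalf
  classical
  rcases A.eq_empty_or_nonempty with hA | hA
  · simp [hA]
  -- setup
  have hne : Nonempty V := ⟨hA.some⟩
  set s : Finset V := (A.toFinite).toFinset with hs
  have hmem : ∀ x, x ∈ s ↔ x ∈ A := fun x => (A.toFinite).mem_toFinset
  have hncard : A.ncard = s.card := Set.ncard_eq_toFinset_card A A.toFinite
  set bdset : Set V := {y : V | y ∉ A ∧ ∃ x ∈ A, G.Adj x y} with hbdset
  set bd : Finset V := (bdset.toFinite).toFinset with hbd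
  have hbdmem : ∀ x, x ∈ bd ↔ x ∈ bdset := fun x => (bdset.toFinite).mem_toFinset
  have hbdcard : bdset.ncard = bd.card := Set.ncard_eq_toFinset_card bdset bdset.toFinite
  set n : ℕ := Fintype.card V with hn
  have hn0 : 0 < n := Fintype.card_pos
  have hnR : (0 : ℝ) < n := by exact_mod_cast hn0
  have hkR : (0 : ℝ) < k := by exact_mod_cast hk
  set m : ℝ := (s.card : ℝ) with hm
  have hm0 : 0 ≤ m := by positivity
  have h2m : 2 * m ≤ n := by
    rw [hm]
    rw [hncard] at hAhalf
    exact_mod_cast hAhalf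
  set α : ℝ := m / n with hα
  set g : V → ℝ := fun x => if x ∈ A then 1 else 0 with hgdef
  set f : V → ℝ := fun x => g x - α with hfdef
  have hg01 : ∀ x, g x = 0 ∨ g x = 1 := by
    intro x; by_cases h : x ∈ A <;> simp [hgdef, h]
  have hgsum : ∑ x, g x = m := by
    rw [hgdef, hm, Finset.sum_boole]
    congr 1
    apply Finset.card_bij (fun a _ => a) <;> simp [hmem]
  have hfsum : ∑ x, f x = 0 := by
    simp only [hfdef, Finset.sum_sub_distrib, hgsum, Finset.sum_const, Finset.card_univ, ← hn,
      nsmul_eq_mul]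
    rw [hα]
    field_simp
    ring
  have hfsq : ∑ x, f x ^ 2 = m - m * m / n := by
    have expand : ∀ x, f x ^ 2 = g x * g x - 2 * α * g x + α * α := by
      intro x; simp only [hfdef]; ring
    have hgg : ∀ x, g x * g x = g x := by
      intro x; rcases hg01 x with h | h <;> rw [h] <;> ring
    simp_rw [expand, hgg]
    rw [Finset.sum_add_distrib, Finset.sum_sub_distrib, hgsum, ← Finset.mul_sum, hgsum,
      Finset.sum_const, Finset.card_univ, ← hn, nsmul_eq_mul, hα]
    field_simp
    ring
  -- neighbor sum machinery
  have hcardN : ∀ x : V, (#(G.neighborFinset x) : ℝ) = (k : ℝ) := by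
    intro x
    rw [G.card_neighborFinset_eq_degree, hreg x]
  have SW : ∀ F : V → V → ℝ,
      (∑ x, ∑ y ∈ G.neighborFinset x, F x y) = ∑ x, ∑ y ∈ G.neighborFinset x, F y x := by
    intro F
    simp_rw [SimpleGraph.neighborFinset_eq_filter, Finset.sum_filter]
    rw [Finset.sum_comm]
    exact Finset.sum_congr rfl fun x _ => Finset.sum_congr rfl fun y _ =>
      if_congr (G.adj_comm y x) rfl rfl
  have hconst_inner : ∀ (r : V → ℝ), ∀ x : V, (∑ _y ∈ G.neighborFinset x, r x) = (k : ℝ) * r x := by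
    intro r x
    rw [Finset.sum_const, nsmul_eq_mul, hcardN x]
  have hS1 : (∑ x, ∑ y ∈ G.neighborFinset x, g y) = k * m := by
    rw [SW (fun _ y => g y)]
    calc (∑ x, ∑ _y ∈ G.neighborFinset x, g x) = ∑ x, (k : ℝ) * g x :=
          Finset.sum_congr rfl fun x _ => hconst_inner g x
      _ = k * m := by rw [← Finset.mul_sum, hgsum]
  set P : ℝ := ∑ x, ∑ y ∈ G.neighborFinset x, g x * g y with hP
  set E : ℝ := ∑ x, ∑ y ∈ G.neighborFinset x, g x * (1 - g y) with hE
  have hPE : P + E = k * m := by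
    rw [hP, hE, ← Finset.sum_add_distrib]
    calc (∑ x, ((∑ y ∈ G.neighborFinset x, g x * g y)
            + ∑ y ∈ G.neighborFinset x, g x * (1 - g y)))
        = ∑ x, (k : ℝ) * g x := by
          refine Finset.sum_congr rfl fun x _ => ?_
          rw [← Finset.sum_add_distrib]
          calc (∑ y ∈ G.neighborFinset x, (g x * g y + g x * (1 - g y)))
              = ∑ _y ∈ G.neighborFinset x, g x :=
                Finset.sum_congr rfl fun y _ => by ring
            _ = (k : ℝ) * g x := hconst_inner g x
      _ = k * m := by rw [← Finset.mul_sum, hgsum]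
  -- the quadratic form equals m - k⁻¹ P
  have hS2 : (∑ x, ∑ y ∈ G.neighborFinset x, f x * f y) = P - α * (k * m) := by
    have expand : ∀ x y, f x * f y = g x * g y - α * g x - α * g y + α * α := by
      intro x y; simp only [hfdef]; ring
    have T3 : (∑ x, ∑ _y ∈ G.neighborFinset x, α * g x) = α * (k * m) := by
      calc (∑ x, ∑ _y ∈ G.neighborFinset x, α * g x)
          = ∑ x, (k : ℝ) * (α * g x) :=
            Finset.sum_congr rfl fun x _ => hconst_inner (fun x => α * g x) x
        _ = (k * α) * ∑ x, g x := by
            rw [Finset.mul_sum]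
            exact Finset.sum_congr rfl fun x _ => by ring
        _ = α * (k * m) := by rw [hgsum]; ring
    have T2 : (∑ x, ∑ y ∈ G.neighborFinset x, α * g y) = α * (k * m) := by
      calc (∑ x, ∑ y ∈ G.neighborFinset x, α * g y)
          = α * ∑ x, ∑ y ∈ G.neighborFinset x, g y := by
            rw [Finset.mul_sum]
            exact Finset.sum_congr rfl fun x _ => by rw [Finset.mul_sum]
        _ = α * (k * m) := by rw [hS1]
    have T4 : (∑ x : V, ∑ _y ∈ G.neighborFinset x, α * α) = α * (k * m) := by
      calc (∑ x : V, ∑ _y ∈ G.neighborFinset x, α * α)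
          = ∑ _x : V, (k : ℝ) * (α * α) :=
            Finset.sum_congr rfl fun x _ => hconst_inner (fun _ => α * α) x
        _ = (n : ℝ) * ((k : ℝ) * (α * α)) := by
            rw [Finset.sum_const, Finset.card_univ, ← hn, nsmul_eq_mul]
        _ = α * (k * (α * n)) := by ring
        _ = α * (k * m) := by rw [hα]; field_simp
    calc (∑ x, ∑ y ∈ G.neighborFinset x, f x * f y)
        = ∑ x, ((∑ y ∈ G.neighborFinset x, g x * g y)
            - (∑ _y ∈ G.neighborFinset x, α * g x)
            - (∑ y ∈ G.neighborFinset x, α * g y)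
            + ∑ _y ∈ G.neighborFinset x, α * α) := by
          refine Finset.sum_congr rfl fun x _ => ?_
          rw [← Finset.sum_sub_distrib, ← Finset.sum_sub_distrib, ← Finset.sum_add_distrib]
          exact Finset.sum_congr rfl fun y _ => expand x y
      _ = P - α * (k * m) := by
          simp only [Finset.sum_add_distrib, Finset.sum_sub_distrib]
          rw [T2, T3, T4, ← hP]
          ring
  have hMf : ∀ x, (((k : ℝ)⁻¹ • G.adjMatrix ℝ) *ᵥ f) x
      = (k : ℝ)⁻¹ * ∑ y ∈ G.neighborFinset x, f y := by
    intro x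
    rw [Matrix.smul_mulVec, Pi.smul_apply, smul_eq_mul,
      SimpleGraph.adjMatrix_mulVec_apply]
  have hRHS : (∑ x, f x * (f x - (((k : ℝ)⁻¹ • G.adjMatrix ℝ) *ᵥ f) x))
      = (k : ℝ)⁻¹ * E := by
    simp_rw [hMf, mul_sub]
    rw [Finset.sum_sub_distrib]
    have : (∑ x, f x * ((k:ℝ)⁻¹ * ∑ y ∈ G.neighborFinset x, f y))
        = (k : ℝ)⁻¹ * ∑ x, ∑ y ∈ G.neighborFinset x, f x * f y := by
      simp only [Finset.mul_sum]
      exact Finset.sum_congr rfl fun x _ => Finset.sum_congr rfl fun y _ => by ring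
    rw [this, hS2]
    have hEeq : E = k * m - P := by linarith [hPE]
    have hsq : ∑ x, f x * f x = m - m * m / n := by
      simp_rw [← sq]
      rw [hfsq]
      ring
    rw [hsq, hEeq, hα]
    field_simp
    ring
  -- bound E by k * bd.card
  have hEbound : E ≤ (k : ℝ) * bd.card := by
    have hswap : E = ∑ x, (1 - g x) * ∑ y ∈ G.neighborFinset x, g y := by
      rw [hE, SW (fun x y => g x * (1 - g y))]
      refine Finset.sum_congr rfl fun x _ => ?_
      rw [Finset.mul_sum]
      exact Finset.sum_congr rfl fun y _ => by ring
    rw [hswap]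
    have hle : ∀ x : V, (1 - g x) * (∑ y ∈ G.neighborFinset x, g y)
        ≤ if x ∈ bd then (k : ℝ) else 0 := by
      intro x
      by_cases hxA : x ∈ A
      · have : g x = 1 := by simp [hgdef, hxA]
        have hxbd : x ∉ bd := by
          rw [hbdmem]; rw [hbdset]; simp [hxA]
        simp [this, hxbd]
      · have hgx : g x = 0 := by simp [hgdef, hxA]
        by_cases hxbd : x ∈ bdset
        · have : x ∈ bd := (hbdmem x).2 hxbd
          simp only [this, if_pos, hgx, sub_zero, one_mul]
          calc (∑ y ∈ G.neighborFinset x, g y) ≤ ∑ _y ∈ G.neighborFinset x, (1:ℝ) :=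
                Finset.sum_le_sum fun y _ => by rcases hg01 y with h|h <;> simp [h]
            _ = (k : ℝ) := by rw [Finset.sum_const, nsmul_eq_mul, hcardN x, mul_one]
        · have hz : ∀ y ∈ G.neighborFinset x, g y = 0 := by
            intro y hy
            rw [G.mem_neighborFinset] at hy
            by_contra hgy
            have hyA : y ∈ A := by
              rcases hg01 y with h|h
              · exact absurd h hgy
              · by_contra hyA; simp [hgdef, hyA] at h
            exact hxbd ⟨hxA, y, hyA, hy.symm⟩
          rw [Finset.sum_eq_zero hz, mul_zero]
          by_cases h : x ∈ bd <;> simp [h, hkR.le]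
    calc (∑ x, (1 - g x) * ∑ y ∈ G.neighborFinset x, g y)
        ≤ ∑ x, if x ∈ bd then (k : ℝ) else 0 := Finset.sum_le_sum fun x _ => hle x
      _ = (k : ℝ) * bd.card := by
          rw [Finset.sum_ite_mem, Finset.univ_inter, Finset.sum_const, nsmul_eq_mul, mul_comm]
  -- spectral bound
  have hspec2 := spectral_bound G hk hconn hreg hspec f hfsum
  rw [hRHS, hfsq] at hspec2
  -- conclude
  have hmn : m / n ≤ 1 / 2 := by
    rw [div_le_div_iff₀ hnR (by norm_num)]
    linarith
  have hsq_lb : m / 2 ≤ m - m * m / n := by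
    have : m * m / n = m * (m / n) := by ring
    nlinarith [mul_le_mul_of_nonneg_left hmn hm0]
  have final : η / 2 * m ≤ (bd.card : ℝ) := by
    have h1 : η * (m / 2) ≤ η * (m - m * m / n) :=
      mul_le_mul_of_nonneg_left hsq_lb hη.le
    have h2 : (k:ℝ)⁻¹ * E ≤ (k:ℝ)⁻¹ * ((k:ℝ) * bd.card) :=
      mul_le_mul_of_nonneg_left hEbound (by positivity)
    rw [inv_mul_cancel_left₀ hkR.ne'] at h2
    calc η / 2 * m = η * (m / 2) := by ring
      _ ≤ η * (m - m * m / n) := h1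
      _ ≤ (k:ℝ)⁻¹ * E := hspec2
      _ ≤ (bd.card : ℝ) := h2
  rw [hncard]
  calc η / 2 * (s.card : ℝ) ≤ (bd.card : ℝ) := final
    _ = (bdset.ncard : ℝ) := by rw [hbdcard]
end
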